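/- Let {v_n} ⊂ C²[0,1] be positive solutions of -v_n'' = μ_n v_n + a(x) v_n^p with v_n'(0)=v_n'(1)=0, where p > 1, a ∈ L^∞(0,1), μ_n → 0 and ‖v_n‖_∞ → 0, and suppose v_n/‖v_n‖_∞ → 1 in C¹[0,1]. Then μ_n/‖v_n‖_∞^{p-1} → -∫₀¹ a(x) dx; in particular, if ∫₀¹ a < 0, then μ_n > 0 for all large n. -/

import Mathlib

open Filter Set MeasureTheory

theorem stmt17 (a : ℝ → ℝ) (p : ℝ) (μ : ℕ → ℝ) (v v' v'' : ℕ → ℝ → ℝ)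
    (hp : 1 < p)
    (habd : ∃ C, ∀ᵐ x ∂(volume.restrict (Ioo (0:ℝ) 1)), |a x| ≤ C)
    (haint : IntegrableOn a (Ioo 0 1) volume)
    (hd1 : ∀ n, ∀ x ∈ Icc (0:ℝ) 1, HasDerivAt (v n) (v' n x) x)
    (hd2 : ∀ n, ∀ x ∈ Icc (0:ℝ) 1, HasDerivAt (v' n) (v'' n x) x)
    (heq : ∀ n, ∀ᵐ x ∂(volume.restrict (Ioo (0:ℝ) 1)),
      -v'' n x = μ n * v n x + a x * v n x ^ p)
    (hbc : ∀ n, v' n 0 = 0 ∧ v' n 1 = 0)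
    (hpos : ∀ n, ∀ x ∈ Icc (0:ℝ) 1, 0 < v n x)
    (M : ℕ → ℝ) (hM : ∀ n, M n = ⨆ x : Icc (0:ℝ) 1, v n ↑x)
    (hμ0 : Tendsto μ atTop (nhds 0))
    (hM0 : Tendsto M atTop (nhds 0))
    (hunif : TendstoUniformlyOn (fun n x => v n x / M n) 1 atTop (Icc 0 1))
    (hunif' : TendstoUniformlyOn (fun n x => v' n x / M n) 0 atTop (Icc 0 1)) :
    Tendsto (fun n => μ n / M n ^ (p - 1)) atTop
      (nhds (-∫ x in (0:ℝ)..1, a x)) ∧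
    ((∫ x in (0:ℝ)..1, a x) < 0 → ∀ᶠ n in atTop, 0 < μ n) := by
  have hp0 : (0:ℝ) ≤ p := by linarith
  -- continuity of v n on Icc
  have hc : ∀ n, ContinuousOn (v n) (Icc 0 1) := fun n x hx =>
    (hd1 n x hx).continuousAt.continuousWithinAt
  -- v n x ≤ M n on Icc
  have hle : ∀ n, ∀ x ∈ Icc (0:ℝ) 1, v n x ≤ M n := by
    intro n x hx
    rw [hM]
    have hbdd : BddAbove (range fun y : Icc (0:ℝ) 1 => v n ↑y) := by
      have := (isCompact_Icc.image_of_continuousOn (hc n)).bddAbove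
      rwa [Set.image_eq_range] at this
    exact le_ciSup hbdd ⟨x, hx⟩
  have hMpos : ∀ n, 0 < M n := fun n =>
    lt_of_lt_of_le (hpos n 0 (by norm_num)) (hle n 0 (by norm_num))
  -- integrability facts
  have hintv : ∀ n, IntegrableOn (v n) (Ioo 0 1) volume := fun n =>
    ((hc n).integrableOn_Icc).mono_set Ioo_subset_Icc_self
  have hcpow : ∀ n, ContinuousOn (fun x => v n x ^ p) (Icc 0 1) := by
    intro n
    exact (hc n).rpow_const (fun x hx => Or.inr hp0)
  have hmeaspow : ∀ n, AEStronglyMeasurable (fun x => v n x ^ p)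
      (volume.restrict (Ioo (0:ℝ) 1)) := fun n =>
    (((hcpow n).mono Ioo_subset_Icc_self)).aestronglyMeasurable measurableSet_Ioo
  have haepow : ∀ n, ∀ᵐ x ∂(volume.restrict (Ioo (0:ℝ) 1)),
      ‖v n x ^ p‖ ≤ M n ^ p := by
    intro n
    filter_upwards [ae_restrict_mem measurableSet_Ioo] with x hx
    have hx' : x ∈ Icc (0:ℝ) 1 := Ioo_subset_Icc_self hx
    rw [Real.norm_eq_abs, abs_of_nonneg (Real.rpow_nonneg (hpos n x hx').le p)]
    exact Real.rpow_le_rpow (hpos n x hx').le (hle n x hx') hp0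
  have hintavp : ∀ n, IntegrableOn (fun x => a x * v n x ^ p) (Ioo 0 1) volume := by
    intro n
    have h := haint.bdd_mul (c := M n ^ p) (hmeaspow n) (haepow n)
    exact h.congr (Filter.Eventually.of_forall fun x => mul_comm _ _)
  -- v'' integrable and integral zero
  have key : ∀ n, μ n * (∫ x in Ioo (0:ℝ) 1, v n x)
      = -∫ x in Ioo (0:ℝ) 1, a x * v n x ^ p := by
    intro n
    have hrhs : IntegrableOn (fun x => μ n * v n x + a x * v n x ^ p) (Ioo 0 1) volume :=
      ((hintv n).const_mul (μ n)).add (hintavp n)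
    have hae : (fun x => v'' n x) =ᵐ[volume.restrict (Ioo (0:ℝ) 1)]
        (fun x => -(μ n * v n x + a x * v n x ^ p)) := by
      filter_upwards [heq n] with x hx
      linarith
    have hintv'' : IntegrableOn (v'' n) (Ioo 0 1) volume :=
      (hrhs.neg.congr hae.symm)
    have hII : IntervalIntegrable (v'' n) volume 0 1 := by
      rw [intervalIntegrable_iff, uIoc_of_le (by norm_num : (0:ℝ) ≤ 1)]
      rwa [integrableOn_Ioc_iff_integrableOn_Ioo]
    have hFTC : ∫ x in (0:ℝ)..1, v'' n x = v' n 1 - v' n 0 := by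
      apply intervalIntegral.integral_eq_sub_of_hasDerivAt
      · intro x hx
        exact hd2 n x (by rwa [uIcc_of_le (by norm_num : (0:ℝ) ≤ 1)] at hx)
      · exact hII
    rw [(hbc n).1, (hbc n).2, sub_zero] at hFTC
    have h0 : ∫ x in Ioo (0:ℝ) 1, v'' n x = 0 := by
      rw [← MeasureTheory.integral_Ioc_eq_integral_Ioo,
        ← intervalIntegral.integral_of_le (by norm_num : (0:ℝ) ≤ 1)]
      exact hFTC
    have h1 : ∫ x in Ioo (0:ℝ) 1, v'' n x
        = ∫ x in Ioo (0:ℝ) 1, -(μ n * v n x + a x * v n x ^ p) := by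
      exact integral_congr_ae hae
    rw [h0, integral_neg, integral_add ((hintv n).const_mul (μ n)) (hintavp n),
      MeasureTheory.integral_const_mul] at h1
    linarith
  -- I and J
  set I : ℕ → ℝ := fun n => ∫ x in Ioo (0:ℝ) 1, v n x / M n with hIdef
  set J : ℕ → ℝ := fun n => ∫ x in Ioo (0:ℝ) 1, a x * (v n x / M n) ^ p with hJdef
  have keydiv : ∀ n, μ n / M n ^ (p - 1) * I n = -J n := by
    intro n
    have hMp : (0:ℝ) < M n := hMpos n
    have hIeq : I n = (∫ x in Ioo (0:ℝ) 1, v n x) / M n := by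
      simp [hIdef, integral_div]
    have hJeq : J n = (∫ x in Ioo (0:ℝ) 1, a x * v n x ^ p) / M n ^ p := by
      have : J n = ∫ x in Ioo (0:ℝ) 1, (a x * v n x ^ p) / M n ^ p := by
        apply integral_congr_ae
        filter_upwards [ae_restrict_mem measurableSet_Ioo] with x hx
        have hx' : x ∈ Icc (0:ℝ) 1 := Ioo_subset_Icc_self hx
        rw [Real.div_rpow (hpos n x hx').le hMp.le, mul_div_assoc]
      rw [this, integral_div]
    have hMpow : M n ^ (p - 1) * M n = M n ^ p := by
      nth_rewrite 2 [← Real.rpow_one (M n)]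
      rw [← Real.rpow_add hMp]
      ring_nf
    have hMpownz : M n ^ (p - 1) ≠ 0 := (Real.rpow_pos_of_pos hMp _).ne'
    have hMppos : (0:ℝ) < M n ^ p := Real.rpow_pos_of_pos hMp _
    rw [hIeq, hJeq]
    field_simp
    rw [← hMpow]
    nlinarith [key n]
  -- pointwise limits
  have hptwise : ∀ x ∈ Ioo (0:ℝ) 1, Tendsto (fun n => v n x / M n) atTop (nhds 1) := by
    intro x hx
    have := hunif.tendsto_at (Ioo_subset_Icc_self hx)
    simpa using this
  -- eventual bound from uniform convergence
  have hevbd : ∀ᶠ n in atTop, ∀ x ∈ Icc (0:ℝ) 1, v n x / M n ≤ 2 := by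
    have := Metric.tendstoUniformlyOn_iff.1 hunif 1 one_pos
    filter_upwards [this] with n hn x hx
    have := hn x hx
    rw [Real.dist_eq] at this
    have : |(1:ℝ) - v n x / M n| < 1 := by simpa using this
    cases abs_lt.1 this with
    | intro h1 h2 => linarith
  -- hI
  have hI1 : Tendsto I atTop (nhds 1) := by
    have h1 : (1:ℝ) = ∫ x in Ioo (0:ℝ) 1, (1:ℝ) := by
      simp
    rw [h1]
    apply tendsto_integral_filter_of_dominated_convergence (fun _ => (2:ℝ))
    · filter_upwards with n
      exact ((((hc n).mono Ioo_subset_Icc_self).div_const (M n))).aestronglyMeasurable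
        measurableSet_Ioo
    · filter_upwards [hevbd] with n hn
      filter_upwards [ae_restrict_mem measurableSet_Ioo] with x hx
      have hx' : x ∈ Icc (0:ℝ) 1 := Ioo_subset_Icc_self hx
      rw [Real.norm_eq_abs, abs_of_nonneg (div_nonneg (hpos n x hx').le (hMpos n).le)]
      exact hn x hx'
    · exact integrableOn_const measure_Ioo_lt_top.ne
    · filter_upwards [ae_restrict_mem measurableSet_Ioo] with x hx
      exact hptwise x hx
  -- hJ
  have hJ1 : Tendsto J atTop (nhds (∫ x in Ioo (0:ℝ) 1, a x)) := by
    apply tendsto_integral_filter_of_dominated_convergence (fun x => |a x| * 2 ^ p)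
    · filter_upwards with n
      exact haint.aestronglyMeasurable.mul
        ((((((hc n).mono Ioo_subset_Icc_self).div_const (M n))).rpow_const
          (fun x hx => Or.inr hp0)).aestronglyMeasurable measurableSet_Ioo)
    · filter_upwards [hevbd] with n hn
      filter_upwards [ae_restrict_mem measurableSet_Ioo] with x hx
      have hx' : x ∈ Icc (0:ℝ) 1 := Ioo_subset_Icc_self hx
      have h0 : (0:ℝ) ≤ v n x / M n := div_nonneg (hpos n x hx').le (hMpos n).le
      rw [Real.norm_eq_abs, abs_mul, abs_of_nonneg (Real.rpow_nonneg h0 p)]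
      exact mul_le_mul_of_nonneg_left
        (Real.rpow_le_rpow h0 (hn x hx') hp0) (abs_nonneg _)
    · exact (haint.abs.mul_const _)
    · filter_upwards [ae_restrict_mem measurableSet_Ioo] with x hx
      have := (hptwise x hx).rpow_const (Or.inr hp0)
      have h1 : Tendsto (fun n => a x * (v n x / M n) ^ p) atTop (nhds (a x * 1 ^ p)) :=
        (tendsto_const_nhds).mul this
      simpa using h1
  -- convert interval integral of a
  have hint_eq : (∫ x in (0:ℝ)..1, a x) = ∫ x in Ioo (0:ℝ) 1, a x := by
    rw [intervalIntegral.integral_of_le (by norm_num : (0:ℝ) ≤ 1),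
      MeasureTheory.integral_Ioc_eq_integral_Ioo]
  -- eventually I n > 1/2 hence nonzero
  have hIev : ∀ᶠ n in atTop, (1:ℝ)/2 < I n :=
    hI1.eventually (eventually_gt_nhds (by norm_num))
  have hmain : Tendsto (fun n => μ n / M n ^ (p - 1)) atTop
      (nhds (-∫ x in (0:ℝ)..1, a x)) := by
    have hlim : Tendsto (fun n => -J n / I n) atTop (nhds (-∫ x in (0:ℝ)..1, a x)) := by
      have := (hJ1.neg).div hI1 one_ne_zero
      rw [hint_eq]
      simp only [div_one] at this
      exact this
    apply hlim.congr'
    filter_upwards [hIev] with n hn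
    rw [div_eq_iff (by intro h; rw [h] at hn; linarith : I n ≠ 0)]
    linarith [keydiv n]
  refine ⟨hmain, fun hneg => ?_⟩
  have : ∀ᶠ n in atTop, 0 < μ n / M n ^ (p - 1) :=
    hmain.eventually (eventually_gt_nhds (by linarith))
  filter_upwards [this] with n hn
  have hMp : (0:ℝ) < M n ^ (p - 1) := Real.rpow_pos_of_pos (hMpos n) _
  have := mul_pos hn hMp
  rwa [div_mul_cancel₀ _ hMp.ne'] at this
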